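/- Let γ = 1 − 2π⁻² and α > γ^{−γ} (1−γ)^{γ−1}. Define f_α(t) := α t^{2γ} − t² − 1 on (0,∞), let (ω⁻_α, ω⁺_α) be the interval on which f_α is positive, and define ψ_α := (f_α')² − 2 f_α f_α''. Then ψ_α(t) > 0 for every t in the closed interval [ω⁻_α, ω⁺_α]; moreover ψ_α is monotone on (ω⁻_α, ω⁺_α). -/

import Mathlib

open MeasureTheory Set Real

noncomputable section

/-- `f_α(t) = α t^{2γ} − t² − 1`. -/
def fA (γ α t : ℝ) : ℝ := α * t ^ (2 * γ) - t ^ 2 - 1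

/-- The derivative `f_α'(t) = 2αγ t^{2γ−1} − 2t`. -/
def fA' (γ α t : ℝ) : ℝ := 2 * α * γ * t ^ (2 * γ - 1) - 2 * t

/-- The second derivative `f_α''(t) = 2αγ(2γ−1) t^{2γ−2} − 2`. -/
def fA'' (γ α t : ℝ) : ℝ := 2 * α * γ * (2 * γ - 1) * t ^ (2 * γ - 2) - 2

/-- `ψ_α := (f_α')² − 2 f_α f_α''`. -/
def psiA (γ α t : ℝ) : ℝ := (fA' γ α t) ^ 2 - 2 * fA γ α t * fA'' γ α t

/-- The left endpoint `ω⁻_α` of the positivity interval of `f_α`. -/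
def omegaMinus (γ α : ℝ) : ℝ := sInf {t : ℝ | 0 < t ∧ 0 < fA γ α t}

/-- The right endpoint `ω⁺_α` of the positivity interval of `f_α`. -/
def omegaPlus (γ α : ℝ) : ℝ := sSup {t : ℝ | 0 < t ∧ 0 < fA γ α t}

/-- `I₀(α) := ∫_{ω⁻_α}^{ω⁺_α} dt / √(f_α(t))`. -/
def I0 (γ α : ℝ) : ℝ :=
  ∫ t in omegaMinus γ α..omegaPlus γ α, 1 / Real.sqrt (fA γ α t)

section aux
variable (γ α : ℝ)

lemma gamma_bounds (hγ : γ = 1 - 2 / π ^ 2) : 1/2 < γ ∧ γ < 1 := by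
  have hπ : (3:ℝ) < π := pi_gt_three
  have hπ2 : (9:ℝ) < π ^ 2 := by nlinarith
  have h1 : 2 / π ^ 2 < 1/2 := by
    rw [div_lt_div_iff₀ (by linarith) (by norm_num)]; nlinarith
  have h2 : 0 < 2 / π ^ 2 := by positivity
  subst hγ; constructor <;> linarith

lemma hasDerivAt_fA (t : ℝ) (ht : 0 < t) : HasDerivAt (fA γ α) (fA' γ α t) t := by
  have h1 : HasDerivAt (fun x : ℝ => x ^ (2*γ)) ((2*γ) * t ^ (2*γ - 1)) t :=
    Real.hasDerivAt_rpow_const (Or.inl ht.ne')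
  have h2 : HasDerivAt (fun x : ℝ => x ^ (2:ℕ)) (2 * t) t := by
    simpa using hasDerivAt_pow 2 t
  have := ((h1.const_mul α).sub h2).sub_const 1
  exact this.congr_deriv (by unfold fA'; ring)

lemma hasDerivAt_fA' (t : ℝ) (ht : 0 < t) : HasDerivAt (fA' γ α) (fA'' γ α t) t := by
  have h1 : HasDerivAt (fun x : ℝ => x ^ (2*γ-1)) ((2*γ-1) * t ^ (2*γ - 1 - 1)) t :=
    Real.hasDerivAt_rpow_const (Or.inl ht.ne')
  have h2 : HasDerivAt (fun x : ℝ => 2 * x) 2 t := by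
    simpa using (hasDerivAt_id t).const_mul 2
  have := (h1.const_mul (2*α*γ)).sub h2
  exact this.congr_deriv (by unfold fA''; rw [show 2*γ-1-1 = 2*γ-2 by ring]; ring)

lemma hasDerivAt_fA'' (t : ℝ) (ht : 0 < t) :
    HasDerivAt (fA'' γ α) (2*α*γ*(2*γ-1)*(2*γ-2) * t ^ (2*γ-3)) t := by
  have h1 : HasDerivAt (fun x : ℝ => x ^ (2*γ-2)) ((2*γ-2) * t ^ (2*γ - 2 - 1)) t :=
    Real.hasDerivAt_rpow_const (Or.inl ht.ne')
  have := (h1.const_mul (2*α*γ*(2*γ-1))).sub_const 2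
  exact this.congr_deriv (by rw [show 2*γ-2-1 = 2*γ-3 by ring]; ring)

lemma hasDerivAt_psiA (t : ℝ) (ht : 0 < t) :
    HasDerivAt (psiA γ α) (-2 * fA γ α t * (2*α*γ*(2*γ-1)*(2*γ-2) * t ^ (2*γ-3))) t := by
  have hA := hasDerivAt_fA γ α t ht
  have hB := hasDerivAt_fA' γ α t ht
  have hC := hasDerivAt_fA'' γ α t ht
  have h1 : HasDerivAt (fun x => (fA' γ α x) ^ 2) (2 * fA' γ α t * fA'' γ α t) t := by
    exact (hB.pow 2).congr_deriv (by ring)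
  have h2 := ((hA.const_mul 2).mul hC)
  have := h1.sub h2
  exact this.congr_deriv (by ring)

lemma psi_key (t : ℝ) (ht : 0 < t) :
    psiA γ α t * t ^ 2 = 4*γ*(1-γ)*(fA γ α t)*(α * t^(2*γ))
      + 4*(fA γ α t)*((1-γ)^2*t^2+γ^2) + 4*((1-γ)*t^2-γ)^2 := by
  have h2 : t ^ ((2:ℝ)) = t ^ (2:ℕ) := by
    rw [show ((2:ℝ)) = ((2:ℕ):ℝ) by norm_num, rpow_natCast]
  have h1 : t ^ (2*γ - 1) = t ^ (2*γ) / t := by rw [rpow_sub ht, rpow_one]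
  have h2' : t ^ (2*γ - 2) = t ^ (2*γ) / t ^ (2:ℕ) := by rw [rpow_sub ht, h2]
  unfold psiA fA fA' fA''
  rw [h1, h2']
  field_simp
  ring

/-- If `f` vanishes and `(1-γ)t² = γ`, then `α` is the critical value. -/
lemma crit_case (hγ0 : 0 < γ) (hγ1 : γ < 1) (t : ℝ) (ht : 0 < t)
    (hF : fA γ α t = 0) (h0 : (1-γ)*t^2 = γ) :
    α = γ ^ (-γ) * (1 - γ) ^ (γ - 1) := by
  have h1γ : (0:ℝ) < 1 - γ := by linarith
  have hts : t ^ (2:ℕ) = γ / (1-γ) := by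
    field_simp at h0 ⊢; linarith
  have hA : t ^ (2*γ) = (γ / (1-γ)) ^ γ := by
    rw [show (2:ℝ)*γ = ((2:ℕ):ℝ)*γ by norm_num, rpow_natCast_mul ht.le, hts]
  have hf0 : α * (γ/(1-γ)) ^ γ = 1/(1-γ) := by
    have := hF
    unfold fA at this
    rw [hA, hts] at this
    field_simp at this ⊢
    linarith
  have hdiv : (γ/(1-γ)) ^ γ = γ ^ γ / (1-γ) ^ γ := Real.div_rpow hγ0.le h1γ.le γ
  have hγγ : (0:ℝ) < γ ^ γ := rpow_pos_of_pos hγ0 γ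
  have h1γγ : (0:ℝ) < (1-γ) ^ γ := rpow_pos_of_pos h1γ γ
  have hneg : γ ^ (-γ) = (γ ^ γ)⁻¹ := by rw [rpow_neg hγ0.le]
  have hsub : (1-γ) ^ (γ-1) = (1-γ) ^ γ / (1-γ) := by rw [rpow_sub h1γ, rpow_one]
  rw [hneg, hsub]
  rw [hdiv] at hf0
  field_simp at hf0 ⊢
  linarith [hf0]

end aux

/-- For `γ = 1 − 2π⁻²` and `α > γ^{−γ}(1−γ)^{γ−1}`, the function
`ψ_α = (f_α')² − 2 f_α f_α''` is positive on the closed interval `[ω⁻_α, ω⁺_α]`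
and monotone on `(ω⁻_α, ω⁺_α)`. -/
theorem psiA_pos_and_monotone (γ α ωm ωp : ℝ) (hγ : γ = 1 - 2 / π ^ 2)
    (hα : γ ^ (-γ) * (1 - γ) ^ (γ - 1) < α)
    (hωm : 0 < ωm) (hlt : ωm < ωp)
    (hpos : {t : ℝ | 0 < t ∧ 0 < fA γ α t} = Ioo ωm ωp) :
    (∀ t ∈ Icc ωm ωp, 0 < psiA γ α t) ∧
      (MonotoneOn (psiA γ α) (Ioo ωm ωp) ∨
        AntitoneOn (psiA γ α) (Ioo ωm ωp)) := by
  obtain ⟨hγh, hγ1⟩ := gamma_bounds γ hγ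
  have hγ0 : 0 < γ := by linarith
  have h1γ : (0:ℝ) < 1 - γ := by linarith
  have hα0 : 0 < α := lt_trans (by positivity) hα
  -- f > 0 on the open interval
  have hfpos : ∀ t ∈ Ioo ωm ωp, 0 < fA γ α t := by
    intro t htI
    have : t ∈ {t : ℝ | 0 < t ∧ 0 < fA γ α t} := hpos ▸ htI
    exact this.2
  -- continuity of fA
  have hcont : ∀ t : ℝ, 0 < t → ContinuousAt (fA γ α) t := by
    intro t ht
    have h1 : ContinuousAt (fun x : ℝ => x ^ (2*γ)) t :=
      Real.continuousAt_rpow_const t (2*γ) (Or.inl ht.ne')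
    exact ((continuousAt_const.mul h1).sub ((continuous_pow 2).continuousAt)).sub continuousAt_const
  -- f vanishes at endpoints (nonneg part)
  have hfm : 0 ≤ fA γ α ωm := by
    have htd : Filter.Tendsto (fA γ α) (nhdsWithin ωm (Ioi ωm)) (nhds (fA γ α ωm)) :=
      ((hcont ωm hωm).continuousWithinAt).tendsto
    refine ge_of_tendsto htd ?_
    filter_upwards [Ioo_mem_nhdsGT_of_mem (show ωm ∈ Ico ωm ωp from ⟨le_refl _, hlt⟩)]
      with t htI
    exact (hfpos t htI).le
  have hωp : 0 < ωp := hωm.trans hlt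
  have hfp : 0 ≤ fA γ α ωp := by
    have htd : Filter.Tendsto (fA γ α) (nhdsWithin ωp (Iio ωp)) (nhds (fA γ α ωp)) :=
      ((hcont ωp hωp).continuousWithinAt).tendsto
    refine ge_of_tendsto htd ?_
    filter_upwards [Ioo_mem_nhdsLT_of_mem (show ωp ∈ Ioc ωm ωp from ⟨hlt, le_refl _⟩)]
      with t htI
    exact (hfpos t htI).le
  -- f nonneg on closed interval
  have hfnn : ∀ t ∈ Icc ωm ωp, 0 ≤ fA γ α t := by
    intro t ⟨h1, h2⟩
    rcases eq_or_lt_of_le h1 with h | h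
    · exact h ▸ hfm
    rcases eq_or_lt_of_le h2 with h' | h'
    · exact h' ▸ hfp
    exact (hfpos t ⟨h, h'⟩).le
  constructor
  · -- positivity
    intro t ⟨h1, h2⟩
    have ht : 0 < t := lt_of_lt_of_le hωm h1
    have hF : 0 ≤ fA γ α t := hfnn t ⟨h1, h2⟩
    have hkey := psi_key γ α t ht
    have hA : 0 < t ^ (2*γ) := rpow_pos_of_pos ht _
    have hψt2 : 0 < psiA γ α t * t ^ 2 := by
      rcases eq_or_lt_of_le hF with hF0 | hF0
      · -- f = 0 : strictness from α ≠ critical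
        have hne : (1-γ)*t^2 - γ ≠ 0 := by
          intro h0
          have := crit_case γ α hγ0 hγ1 t ht hF0.symm (by linarith)
          exact absurd (this ▸ hα) (lt_irrefl _)
        rw [hkey, ← hF0]
        have : 0 < ((1-γ)*t^2-γ)^2 := by positivity
        nlinarith
      · rw [hkey]
        have ht1 : 0 < 4*γ*(1-γ)*(fA γ α t)*(α * t^(2*γ)) := by positivity
        have ht2 : 0 < 4*(fA γ α t)*((1-γ)^2*t^2+γ^2) := by positivity
        nlinarith [sq_nonneg ((1-γ)*t^2-γ)]
    nlinarith [sq_nonneg t]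
  · -- monotone
    left
    have hderiv : ∀ t ∈ Ioo ωm ωp,
        0 < deriv (psiA γ α) t := by
      intro t htI
      have ht : 0 < t := hωm.trans htI.1
      rw [(hasDerivAt_psiA γ α t ht).deriv]
      have hf := hfpos t htI
      have hrp : 0 < t ^ (2*γ-3) := rpow_pos_of_pos ht _
      have h2γ2 : 2*γ - 2 < 0 := by linarith
      have h2γ1 : 0 < 2*γ - 1 := by linarith
      have : 2*α*γ*(2*γ-1)*(2*γ-2) * t ^ (2*γ-3) < 0 := by
        have hp : 0 < 2*α*γ*(2*γ-1) := by positivity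
        have := mul_pos (mul_pos hp (by linarith : 0 < -(2*γ-2))) hrp
        nlinarith
      nlinarith
    have hcontψ : ContinuousOn (psiA γ α) (Ioo ωm ωp) := by
      intro t htI
      exact ((hasDerivAt_psiA γ α t (hωm.trans htI.1)).continuousAt).continuousWithinAt
    have hSM : StrictMonoOn (psiA γ α) (Ioo ωm ωp) :=
      strictMonoOn_of_deriv_pos (convex_Ioo ωm ωp) hcontψ
        (fun x hx => hderiv x (by rwa [interior_Ioo] at hx))
    exact hSM.monotoneOn
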